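/- Let k ≥ 5 and suppose k + 2 ≤ n ≤ (3k−1)/2. Then (k+1)(n−k) + 2 ≤ C(k,0) + C(k,1) + C(k,2), and consequently g(n,k) ≥ k−2. -/

import Mathlib

open scoped Classical

noncomputable section

/-- Boolean functions in `n` variables. -/
abbrev BF (n : ℕ) := (Fin n → ZMod 2) → ZMod 2

/-- `A` is a `k`-dimensional flat (coset of a `k`-dimensional linear subspace) of `𝔽₂ⁿ`. -/
def IsFlat {n : ℕ} (A : Set (Fin n → ZMod 2)) (k : ℕ) : Prop :=
  ∃ (W : Submodule (ZMod 2) (Fin n → ZMod 2)) (v : Fin n → ZMod 2),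
    Module.finrank (ZMod 2) W = k ∧ A = (fun w => v + w) '' (W : Set (Fin n → ZMod 2))

/-- The sum (parity) of `f` over a subset of `𝔽₂ⁿ`. -/
def flatSum {n : ℕ} (f : BF n) (A : Set (Fin n → ZMod 2)) : ZMod 2 :=
  ∑ x ∈ A.toFinite.toFinset, f x

/-- The restriction of `f` to `A` has algebraic degree at most `d`:
by the standard parity criterion, this holds iff the sum of `f` over every
`(d+1)`-dimensional flat contained in `A` vanishes. -/
def DegLE {n : ℕ} (f : BF n) (A : Set (Fin n → ZMod 2)) (d : ℕ) : Prop :=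
  ∀ B : Set (Fin n → ZMod 2), IsFlat B (d + 1) → B ⊆ A → flatSum f B = 0

/-- The algebraic degree of the restriction of `f` to `A`. -/
def degOn {n : ℕ} (f : BF n) (A : Set (Fin n → ZMod 2)) : ℕ :=
  sInf {d | DegLE f A d}

/-- `α(f, k)`: the minimal algebraic degree of `f` restricted to a `k`-dimensional flat. -/
def alphaDeg {n : ℕ} (f : BF n) (k : ℕ) : ℕ :=
  sInf {d | ∃ A, IsFlat A k ∧ degOn f A = d}

/-- `g(n, k) = max_f α(f, k)`. -/
def gdeg (n k : ℕ) : ℕ :=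
  sSup {m | ∃ f : BF n, alphaDeg f k = m}

/-- The nonlinearity of the restriction of `f` to `A`: the minimal Hamming distance,
on `A`, from `f` to an affine function. -/
def nlOn {n : ℕ} (f : BF n) (A : Set (Fin n → ZMod 2)) : ℕ :=
  sInf {m | ∃ (a : Fin n → ZMod 2) (c : ZMod 2),
    m = (A.toFinite.toFinset.filter (fun x => f x ≠ (∑ i, a i * x i) + c)).card}

-- image of a flat under an injective affine map is a flat

lemma IsFlat.affine_image {n m : ℕ} {A : Set (Fin n → ZMod 2)} {d : ℕ} (h : IsFlat A d)
    (l : (Fin n → ZMod 2) →ₗ[ZMod 2] (Fin m → ZMod 2)) (hl : Function.Injective l)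
    (v : Fin m → ZMod 2) : IsFlat ((fun x => v + l x) '' A) d := by
  obtain ⟨W, u, hW, rfl⟩ := h
  refine ⟨W.map l, v + l u, ?_, ?_⟩
  · rw [← hW]; exact (Submodule.equivMapOfInjective l hl W).symm.finrank_eq
  · ext z
    simp only [Set.mem_image, Submodule.map_coe, SetLike.mem_coe]
    constructor
    · rintro ⟨x, ⟨w, hw, rfl⟩, rfl⟩
      exact ⟨l w, ⟨w, hw, rfl⟩, by simp [map_add]; abel⟩
    · rintro ⟨x, ⟨w, hw, rfl⟩, rfl⟩
      exact ⟨u + w, ⟨w, hw, rfl⟩, by simp [map_add]; abel⟩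

lemma IsFlat.card {n : ℕ} {A : Set (Fin n → ZMod 2)} {d : ℕ} (h : IsFlat A d) :
    A.toFinite.toFinset.card = 2 ^ d := by
  obtain ⟨W, v, hW, rfl⟩ := h
  rw [Set.Finite.card_toFinset]
  have h1 : ((fun w => v + w) '' (W : Set (Fin n → ZMod 2))).toFinset.card
      = (W : Set (Fin n → ZMod 2)).toFinset.card := by
    rw [Set.toFinset_image, Finset.card_image_of_injective _ (add_right_injective v)]
  rw [← Set.toFinset_card, h1, Set.toFinset_card]
  rw [← hW]
  have := Module.card_eq_pow_finrank (K := ZMod 2) (V := W)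
  rwa [ZMod.card] at this

lemma exists_flat {n k : ℕ} (h : k ≤ n) : ∃ A : Set (Fin n → ZMod 2), IsFlat A k := by
  rcases Nat.eq_zero_or_pos k with rfl | hk
  · exact ⟨_, ⊥, 0, by simp, rfl⟩
  · have : NeZero k := ⟨hk.ne'⟩
    set g : Fin n → Fin k := fun i => if hi : (i : ℕ) < k then ⟨i, hi⟩ else 0 with hg
    have hgs : Function.Surjective g := by
      intro j
      refine ⟨⟨(j : ℕ), lt_of_lt_of_le j.2 h⟩, ?_⟩
      simp [hg, j.2]
    set l := LinearMap.funLeft (ZMod 2) (ZMod 2) g with hl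
    have hinj : Function.Injective l := LinearMap.funLeft_injective_of_surjective _ _ _ hgs
    refine ⟨_, LinearMap.range l, 0, ?_, rfl⟩
    rw [LinearMap.finrank_range_of_inj hinj, Module.finrank_fintype_fun_eq_card, Fintype.card_fin]

-- splitting a (m+1)-flat into two disjoint m-flats

lemma IsFlat.split {n m : ℕ} {B : Set (Fin n → ZMod 2)} (h : IsFlat B (m + 1)) :
    ∃ B1 B2 : Set (Fin n → ZMod 2), IsFlat B1 m ∧ IsFlat B2 m ∧ B1 ∪ B2 = B ∧
      Disjoint B1 B2 := by
  obtain ⟨W, v, hW, rfl⟩ := h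
  have : FiniteDimensional (ZMod 2) W := inferInstance
  let b : Module.Basis (Fin (m + 1)) (ZMod 2) W := Module.finBasisOfFinrankEq (ZMod 2) W hW
  let ψ : W →ₗ[ZMod 2] ZMod 2 := b.coord 0
  have hψ : ψ (b 0) = 1 := by simp [ψ]
  have hker : Module.finrank (ZMod 2) (LinearMap.ker ψ) = m := by
    have h1 := LinearMap.finrank_range_add_finrank_ker ψ
    have h2 : LinearMap.range ψ = ⊤ := by
      rw [LinearMap.range_eq_top]
      intro c
      exact ⟨c • b 0, by simp [hψ]⟩
    rw [h2, hW] at h1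
    have : Module.finrank (ZMod 2) (⊤ : Submodule (ZMod 2) (ZMod 2)) = 1 := by
      simp [finrank_top]
    omega
  let K : Submodule (ZMod 2) (Fin n → ZMod 2) := (LinearMap.ker ψ).map W.subtype
  have hKrank : Module.finrank (ZMod 2) K = m := by
    rw [← hker]
    exact ((LinearMap.ker ψ).equivMapOfInjective W.subtype (Submodule.injective_subtype W)).symm.finrank_eq
  have hKW : ∀ x ∈ K, x ∈ W := by
    rintro x ⟨c, hc, rfl⟩; exact (c : W).2
  refine ⟨(fun w => v + w) '' K, (fun w => (v + (b 0 : Fin n → ZMod 2)) + w) '' K,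
    ⟨K, v, hKrank, rfl⟩, ⟨K, _, hKrank, rfl⟩, ?_, ?_⟩
  · ext z
    simp only [Set.mem_union, Set.mem_image, SetLike.mem_coe]
    constructor
    · rintro (⟨w, hw, rfl⟩ | ⟨w, hw, rfl⟩)
      · exact ⟨w, hKW w hw, rfl⟩
      · refine ⟨(b 0 : Fin n → ZMod 2) + w, W.add_mem (b 0).2 (hKW w hw), by abel⟩
    · rintro ⟨w, hw, rfl⟩
      by_cases hc : ψ ⟨w, hw⟩ = 0
      · exact Or.inl ⟨w, ⟨⟨w, hw⟩, hc, rfl⟩, rfl⟩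
      · right
        refine ⟨w - (b 0 : Fin n → ZMod 2), ⟨⟨w, hw⟩ - b 0, ?_, rfl⟩, by abel⟩
        have h1 : ψ ⟨w, hw⟩ = 1 := by
          have : ∀ x : ZMod 2, x = 0 ∨ x = 1 := by decide
          rcases this (ψ ⟨w, hw⟩) with h | h
          · exact absurd h hc
          · exact h
        simp only [SetLike.mem_coe, LinearMap.mem_ker, map_sub, h1, hψ, sub_self]
  · rw [Set.disjoint_left]
    rintro z ⟨w1, hw1, rfl⟩ ⟨w2, hw2, heq⟩
    have : (b 0 : Fin n → ZMod 2) = w1 - w2 := by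
      simp only at heq
      have h2 : v + w1 = v + ((b 0 : Fin n → ZMod 2) + w2) := by
        rw [← heq]; abel
      have h3 := add_left_cancel h2
      rw [h3]; abel
    obtain ⟨c1, hc1, rfl⟩ := hw1
    obtain ⟨c2, hc2, rfl⟩ := hw2
    have hb : b 0 = c1 - c2 := by
      apply Subtype.ext
      simpa using this
    have : ψ (b 0) = 0 := by
      rw [hb, map_sub]
      simp only [SetLike.mem_coe, LinearMap.mem_ker] at hc1 hc2
      rw [hc1, hc2, sub_self]
    rw [hψ] at this
    exact one_ne_zero this

lemma flatSum_union {n : ℕ} (f : BF n) {B1 B2 : Set (Fin n → ZMod 2)}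
    (h : Disjoint B1 B2) : flatSum f (B1 ∪ B2) = flatSum f B1 + flatSum f B2 := by
  unfold flatSum
  rw [← Finset.sum_union]
  · congr 1
    apply Finset.coe_injective
    simp [Set.union_def]
  · simpa [Finset.disjoint_left, Set.disjoint_left] using h

lemma descent {n : ℕ} (f : BF n) {A : Set (Fin n → ZMod 2)} {m : ℕ} :
    ∀ {B : Set (Fin n → ZMod 2)}, IsFlat B m → B ⊆ A → flatSum f B ≠ 0 →
    ∀ j ≤ m, ∃ B', IsFlat B' j ∧ B' ⊆ A ∧ flatSum f B' ≠ 0 := by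
  induction m with
  | zero =>
    intro B hB hBA hs j hj
    interval_cases j
    exact ⟨B, hB, hBA, hs⟩
  | succ m ih =>
    intro B hB hBA hs j hj
    rcases Nat.eq_or_lt_of_le hj with rfl | hj'
    · exact ⟨B, hB, hBA, hs⟩
    · obtain ⟨B1, B2, h1, h2, hu, hd⟩ := hB.split
      have hsum : flatSum f B1 + flatSum f B2 ≠ 0 := by
        rw [← flatSum_union f hd, hu]; exact hs
      have : flatSum f B1 ≠ 0 ∨ flatSum f B2 ≠ 0 := by
        by_contra hc
        push_neg at hc
        rw [hc.1, hc.2, add_zero] at hsum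
        exact hsum rfl
      rcases this with h | h
      · exact ih h1 (fun x hx => hBA (hu ▸ Or.inl hx)) h j (by omega)
      · exact ih h2 (fun x hx => hBA (hu ▸ Or.inr hx)) h j (by omega)

lemma coordFlat {k : ℕ} (hk : 2 ≤ k) {a c : Fin k} (hac : a ≠ c) (α β : ZMod 2) :
    IsFlat {y : Fin k → ZMod 2 | y a = α ∧ y c = β} (k - 2) := by
  set L : (Fin k → ZMod 2) →ₗ[ZMod 2] (ZMod 2 × ZMod 2) :=
    (LinearMap.proj a).prod (LinearMap.proj c) with hL
  have hLy : ∀ y, L y = (y a, y c) := fun y => rfl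
  have hsurj : Function.Surjective L := by
    rintro ⟨s, t⟩
    refine ⟨Pi.single a s + Pi.single c t, ?_⟩
    rw [hLy]
    simp [Pi.single_eq_of_ne hac, Pi.single_eq_of_ne (Ne.symm hac)]
  have hker : Module.finrank (ZMod 2) (LinearMap.ker L) = k - 2 := by
    have h1 := LinearMap.finrank_range_add_finrank_ker L
    rw [LinearMap.range_eq_top.mpr hsurj, finrank_top, Module.finrank_fintype_fun_eq_card,
      Fintype.card_fin] at h1
    have h2 : Module.finrank (ZMod 2) (ZMod 2 × ZMod 2) = 2 := by
      simp [Module.finrank_prod]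
    omega
  set v0 : Fin k → ZMod 2 := Pi.single a α + Pi.single c β with hv0
  have hv0a : v0 a = α := by
    simp [hv0, Pi.single_eq_of_ne hac, Pi.single_eq_of_ne (Ne.symm hac)]
  have hv0c : v0 c = β := by
    simp [hv0, Pi.single_eq_of_ne hac, Pi.single_eq_of_ne (Ne.symm hac)]
  refine ⟨LinearMap.ker L, v0, hker, ?_⟩
  ext y
  simp only [Set.mem_setOf_eq, Set.mem_image, SetLike.mem_coe, LinearMap.mem_ker]
  constructor
  · rintro ⟨h1, h2⟩
    refine ⟨y - v0, ?_, by abel⟩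
    rw [hLy]
    simp only [Pi.sub_apply, h1, h2, hv0a, hv0c, sub_self]
    rfl
  · rintro ⟨w, hw, rfl⟩
    rw [hLy] at hw
    have hw1 : w a = 0 := congrArg Prod.fst hw
    have hw2 : w c = 0 := congrArg Prod.snd hw
    constructor
    · simp [hv0a, hw1]
    · simp [hv0c, hw2]

abbrev Jk (k : ℕ) := Option {p : Fin k × Fin k // p.1 ≤ p.2}

def oth {m : ℕ} (a : Fin (m + 2)) : Fin (m + 2) := if a = 0 then 1 else 0

lemma oth_ne {m : ℕ} (a : Fin (m + 2)) : oth a ≠ a := by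
  unfold oth
  split
  · rename_i h; rw [h]; exact Fin.zero_ne_one.symm
  · rename_i h; exact fun hc => h hc.symm

def jspec {m : ℕ} (j : Jk (m + 2)) : (Fin (m + 2) × Fin (m + 2)) × (ZMod 2 × ZMod 2) :=
  match j with
  | none => ((0, 1), (0, 0))
  | some p => if p.1.1 = p.1.2 then ((p.1.1, oth p.1.1), (1, 0)) else ((p.1.1, p.1.2), (1, 1))

lemma jspec_ne {m : ℕ} (j : Jk (m + 2)) : (jspec j).1.1 ≠ (jspec j).1.2 := by
  match j with
  | none => exact Fin.zero_ne_one
  | some p =>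
    unfold jspec
    simp only
    split
    · exact (oth_ne p.1.1).symm
    · rename_i h; exact h

def Cset {m : ℕ} (j : Jk (m + 2)) : Set (Fin (m + 2) → ZMod 2) :=
  {y | y (jspec j).1.1 = (jspec j).2.1 ∧ y (jspec j).1.2 = (jspec j).2.2}

lemma Cset_isFlat {m : ℕ} (j : Jk (m + 2)) : IsFlat (Cset j) m := by
  have := coordFlat (k := m + 2) (by omega) (jspec_ne j) (jspec j).2.1 (jspec j).2.2
  simpa [Cset] using this

def pac {m : ℕ} (a c : Fin (m + 2)) : Fin (m + 2) → ZMod 2 :=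
  fun i => if i = a ∨ i = c then 1 else 0

lemma mem0 {m : ℕ} (j : Jk (m + 2)) : ((0 : Fin (m + 2) → ZMod 2) ∈ Cset j) ↔ j = none := by
  match j with
  | none => simp [Cset, jspec]
  | some p =>
    simp only [Cset, jspec, Set.mem_setOf_eq]
    split <;> simp [Pi.zero_apply, (zero_ne_one (α := ZMod 2))]

lemma mem1 {m : ℕ} (a : Fin (m + 2)) (p : {p : Fin (m + 2) × Fin (m + 2) // p.1 ≤ p.2}) :
    (pac a a ∈ Cset (some p)) ↔ p.1 = (a, a) := by
  have hpac : ∀ i, pac a a i = if i = a then (1 : ZMod 2) else 0 := by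
    intro i; simp [pac]
  simp only [Cset, Set.mem_setOf_eq, jspec]
  split
  · rename_i h
    simp only [hpac]
    constructor
    · rintro ⟨h1, _⟩
      have ha : p.1.1 = a := by by_contra hc; simp [hc] at h1
      exact Prod.ext ha (h ▸ ha)
    · intro hp
      have h1 : p.1.1 = a := by rw [hp]
      have h2 : oth p.1.1 ≠ a := by rw [h1]; exact fun hc => (oth_ne a) (hc)
      simp only [h1, if_pos rfl, hpac]
      exact ⟨rfl, if_neg (oth_ne a)⟩
  · rename_i h
    simp only [hpac]
    constructor
    · rintro ⟨h1, h2⟩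
      have ha : p.1.1 = a := by by_contra hc; simp [hc] at h1
      have hc : p.1.2 = a := by by_contra hc; simp [hc] at h2
      exact absurd (ha.trans hc.symm) h
    · intro hp
      have : p.1.1 = p.1.2 := by rw [hp]
      exact absurd this h

lemma mem2 {m : ℕ} {a c : Fin (m + 2)} (hac : a < c)
    (p : {p : Fin (m + 2) × Fin (m + 2) // p.1 ≤ p.2}) (hp : p.1.1 ≠ p.1.2) :
    (pac a c ∈ Cset (some p)) ↔ p.1 = (a, c) := by
  have hpac : ∀ i, (pac a c i = 1 ↔ (i = a ∨ i = c)) := by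
    intro i
    unfold pac
    split
    · rename_i h; simp [h]
    · rename_i h; simp [h, (zero_ne_one (α := ZMod 2))]
  simp only [Cset, Set.mem_setOf_eq, jspec, if_neg hp]
  constructor
  · rintro ⟨h1, h2⟩
    rw [hpac] at h1 h2
    have hle := p.2
    rcases h1 with h1 | h1 <;> rcases h2 with h2 | h2
    · exact absurd (h1.trans h2.symm) hp
    · exact Prod.ext h1 h2
    · exfalso
      rw [h1, h2] at hle hp
      exact absurd (le_antisymm hle hac.le) hp
    · exact absurd (h1.trans h2.symm) hp
  · intro hp1
    have e1 : p.1.1 = a := by rw [hp1]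
    have e2 : p.1.2 = c := by rw [hp1]
    rw [hpac, hpac]
    exact ⟨Or.inl e1, Or.inr e2⟩

def stdv {m : ℕ} (j : Jk (m + 2)) : Jk (m + 2) → ZMod 2 := fun j' => if j' = j then 1 else 0

lemma exists_psi {n m : ℕ} {A : Set (Fin n → ZMod 2)} (hA : IsFlat A (m + 2)) :
    ∃ Ψ : BF n →ₗ[ZMod 2] (Jk (m + 2) → ZMod 2),
      Function.Surjective Ψ ∧
      ∀ f : BF n, (∀ B : Set (Fin n → ZMod 2), IsFlat B m → B ⊆ A → flatSum f B = 0) →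
        Ψ f = 0 := by
  classical
  obtain ⟨W, v, hW, hAeq⟩ := hA
  have : FiniteDimensional (ZMod 2) W := inferInstance
  let b : Module.Basis (Fin (m + 2)) (ZMod 2) W := Module.finBasisOfFinrankEq (ZMod 2) W hW
  let l : (Fin (m + 2) → ZMod 2) →ₗ[ZMod 2] (Fin n → ZMod 2) :=
    W.subtype.comp (b.equivFun.symm : (Fin (m + 2) → ZMod 2) ≃ₗ[ZMod 2] W).toLinearMap
  have hl : Function.Injective l :=
    (Submodule.injective_subtype W).comp b.equivFun.symm.injective
  have hlW : ∀ y, l y ∈ W := fun y => (b.equivFun.symm y).2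
  set φ : (Fin (m + 2) → ZMod 2) → (Fin n → ZMod 2) := fun y => v + l y with hφdef
  have hφ : Function.Injective φ := fun x y h => hl (by simpa [hφdef] using h)
  have hφA : ∀ y, φ y ∈ A := by
    intro y
    rw [hAeq]
    exact ⟨l y, hlW y, rfl⟩
  let CF : Jk (m + 2) → Finset (Fin (m + 2) → ZMod 2) :=
    fun j => Finset.univ.filter (fun y => y ∈ Cset j)
  have hCF : ∀ j y, y ∈ CF j ↔ y ∈ Cset j := by
    intro j y; simp [CF]
  let Ψ : BF n →ₗ[ZMod 2] (Jk (m + 2) → ZMod 2) :=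
    { toFun := fun f j => ∑ y ∈ CF j, f (φ y)
      map_add' := by
        intro f g; funext j; simp [Finset.sum_add_distrib]
      map_smul' := by
        intro c f; funext j; simp [Finset.mul_sum] }
  have hΨapp : ∀ f j, Ψ f j = ∑ y ∈ CF j, f (φ y) := fun f j => rfl
  refine ⟨Ψ, ?_, ?_⟩
  · -- surjectivity
    have hdelta : ∀ p : Fin (m + 2) → ZMod 2,
        Ψ (fun x => if x = φ p then 1 else 0) = fun j => if p ∈ Cset j then (1 : ZMod 2) else 0 := by
      intro p
      funext j
      rw [hΨapp]
      have : ∀ y ∈ CF j, (if φ y = φ p then (1 : ZMod 2) else 0) = (if y = p then 1 else 0) := by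
        intro y _
        by_cases h : y = p
        · simp [h]
        · rw [if_neg (fun hc => h (hφ hc)), if_neg h]
      rw [Finset.sum_congr rfl this, Finset.sum_ite_eq' (CF j) p (fun _ => 1)]
      simp [hCF]
    set R := LinearMap.range Ψ with hR
    have h0 : stdv none ∈ R := by
      refine ⟨fun x => if x = φ 0 then 1 else 0, ?_⟩
      rw [hdelta]
      funext j
      unfold stdv
      exact if_congr (mem0 j) rfl rfl
    have h1 : ∀ a : Fin (m + 2), stdv (some ⟨(a, a), le_rfl⟩) ∈ R := by
      intro a
      have hwR : Ψ (fun x => if x = φ (pac a a) then 1 else 0) ∈ R := ⟨_, rfl⟩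
      set w : Jk (m + 2) → ZMod 2 := Ψ (fun x => if x = φ (pac a a) then 1 else 0) with hwdef
      have hw : w = fun j => if pac a a ∈ Cset j then (1 : ZMod 2) else 0 := hdelta _
      have key : w = stdv (some ⟨(a, a), le_rfl⟩) + w none • stdv none := by
        funext j
        match j with
        | none =>
          have e1 : stdv (some ⟨(a, a), le_rfl⟩) (none : Jk (m + 2)) = 0 :=
            if_neg (fun hc => nomatch hc)
          have e2 : stdv (none : Jk (m + 2)) none = 1 := if_pos rfl
          simp only [Pi.add_apply, Pi.smul_apply, smul_eq_mul, e1, e2, mul_one, zero_add]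
        | some p =>
          have e1 : stdv (none : Jk (m + 2)) (some p) = 0 :=
            if_neg (fun hc => nomatch hc)
          have e2 : stdv (some ⟨(a, a), le_rfl⟩) (some p)
              = if pac a a ∈ Cset (some p) then (1 : ZMod 2) else 0 := by
            unfold stdv
            refine if_congr ?_ rfl rfl
            rw [Option.some_inj, Subtype.ext_iff, mem1 a p]
          simp only [Pi.add_apply, Pi.smul_apply, smul_eq_mul, e1, e2, mul_zero, add_zero]
          all_goals exact congrFun hw (some p)
      have hst : stdv (some ⟨(a, a), le_rfl⟩) = w - w none • stdv none :=
        eq_sub_of_add_eq key.symm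
      rw [hst]
      exact Submodule.sub_mem R hwR (Submodule.smul_mem R _ h0)
    have h1' : ∀ p : {p : Fin (m + 2) × Fin (m + 2) // p.1 ≤ p.2}, p.1.1 = p.1.2 →
        stdv (some p) ∈ R := by
      intro p hp
      have : p = ⟨(p.1.1, p.1.1), le_rfl⟩ := Subtype.ext (Prod.ext rfl hp.symm)
      rw [this]
      exact h1 p.1.1
    have h2 : ∀ p : {p : Fin (m + 2) × Fin (m + 2) // p.1 ≤ p.2}, p.1.1 ≠ p.1.2 →
        stdv (some p) ∈ R := by
      intro p hp
      have hlt : p.1.1 < p.1.2 := lt_of_le_of_ne p.2 hp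
      have hwR : Ψ (fun x => if x = φ (pac p.1.1 p.1.2) then 1 else 0) ∈ R := ⟨_, rfl⟩
      set w : Jk (m + 2) → ZMod 2 := Ψ (fun x => if x = φ (pac p.1.1 p.1.2) then 1 else 0)
        with hwdef
      have hw : w = fun j => if pac p.1.1 p.1.2 ∈ Cset j then (1 : ZMod 2) else 0 := hdelta _
      have key : w = stdv (some p) + w none • stdv none +
          ∑ a : Fin (m + 2), w (some ⟨(a, a), le_rfl⟩) • stdv (some ⟨(a, a), le_rfl⟩) := by
        funext j
        have hsum_apply : ∀ j' : Jk (m + 2), (∑ a : Fin (m + 2),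
            w (some ⟨(a, a), le_rfl⟩) • stdv (some ⟨(a, a), le_rfl⟩)) j'
            = ∑ a : Fin (m + 2), w (some ⟨(a, a), le_rfl⟩) * stdv (some ⟨(a, a), le_rfl⟩) j' := by
          intro j'
          rw [Finset.sum_apply]
          simp [smul_eq_mul]
        match j with
        | none =>
          have e1 : stdv (some p) (none : Jk (m + 2)) = 0 :=
            if_neg (fun hc => nomatch hc)
          have e2 : stdv (none : Jk (m + 2)) none = 1 := if_pos rfl
          have e3 : ∀ a ∈ Finset.univ, w (some ⟨(a, a), le_rfl⟩) *
              stdv (some ⟨(a, a), le_rfl⟩) (none : Jk (m + 2)) = 0 := by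
            intro a _
            rw [show stdv (some ⟨(a, a), le_rfl⟩) (none : Jk (m + 2)) = 0 from
              if_neg (fun hc => nomatch hc), mul_zero]
          simp only [Pi.add_apply, Pi.smul_apply, smul_eq_mul, hsum_apply, e1, e2, mul_one,
            zero_add]
          rw [Finset.sum_congr rfl e3, Finset.sum_const_zero, add_zero]
        | some q =>
          have e1 : stdv (none : Jk (m + 2)) (some q) = 0 :=
            if_neg (fun hc => nomatch hc)
          simp only [Pi.add_apply, Pi.smul_apply, smul_eq_mul, hsum_apply, e1, mul_zero,
            add_zero]
          by_cases hq : q.1.1 = q.1.2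
          · -- diagonal q
            have hqe : q = ⟨(q.1.1, q.1.1), le_rfl⟩ := Subtype.ext (Prod.ext rfl hq.symm)
            have e2 : stdv (some p) (some q) = 0 := by
              unfold stdv
              rw [if_neg]
              intro hc
              rw [Option.some_inj, Subtype.ext_iff] at hc
              apply hp
              have : q.1.1 = q.1.2 := hq
              rw [← hc]
              exact hq
            have hstdq : ∀ a : Fin (m + 2), stdv (some ⟨(a, a), le_rfl⟩) (some q)
                = if a = q.1.1 then (1 : ZMod 2) else 0 := by
              intro a
              unfold stdv
              refine if_congr ?_ rfl rfl
              rw [Option.some_inj]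
              constructor
              · intro h
                have h' : (q : Fin (m + 2) × Fin (m + 2)) = (a, a) := by rw [h]
                rw [h']
              · intro h
                have h1 : q.1.1 = a := h.symm
                exact Subtype.ext (Prod.ext h1 (hq.symm.trans h1))
            have hsq : ∑ a : Fin (m + 2), w (some ⟨(a, a), le_rfl⟩) *
                stdv (some ⟨(a, a), le_rfl⟩) (some q)
                = w (some ⟨(q.1.1, q.1.1), le_rfl⟩) := by
              rw [Finset.sum_congr rfl (fun a _ => by rw [hstdq a])]
              simp only [mul_ite, mul_one, mul_zero]
              rw [Finset.sum_ite_eq' Finset.univ q.1.1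
                (fun a => w (some ⟨(a, a), le_rfl⟩))]
              simp
            rw [e2, zero_add, hsq]
            exact congrArg (fun z => w (some z)) hqe
          · -- off-diagonal q
            have e3 : ∀ a ∈ Finset.univ, w (some ⟨(a, a), le_rfl⟩) *
                stdv (some ⟨(a, a), le_rfl⟩) (some q) = 0 := by
              intro a _
              have hz : stdv (some ⟨(a, a), le_rfl⟩) (some q) = 0 := by
                unfold stdv
                rw [if_neg]
                intro hc
                rw [Option.some_inj, Subtype.ext_iff] at hc
                apply hq
                rw [hc]
              rw [hz, mul_zero]
            rw [Finset.sum_congr rfl e3, Finset.sum_const_zero, add_zero]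
            have hL : w (some q) = if pac p.1.1 p.1.2 ∈ Cset (some q) then (1 : ZMod 2) else 0 :=
              congrFun hw (some q)
            rw [hL]
            unfold stdv
            refine if_congr ?_ rfl rfl
            rw [mem2 hlt q hq, Option.some_inj, Subtype.ext_iff]
      have hst : stdv (some p) = w -
          (∑ a : Fin (m + 2), w (some ⟨(a, a), le_rfl⟩) • stdv (some ⟨(a, a), le_rfl⟩)) -
          w none • stdv none :=
        eq_sub_of_add_eq (eq_sub_of_add_eq key.symm)
      rw [hst]
      refine Submodule.sub_mem R (Submodule.sub_mem R hwR ?_) (Submodule.smul_mem R _ h0)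
      exact Submodule.sum_mem R (fun a _ => Submodule.smul_mem R _ (h1 a))
    have hall : ∀ t : Jk (m + 2) → ZMod 2, t ∈ R := by
      intro t
      have ht : t = ∑ j : Jk (m + 2), t j • stdv j := by
        funext j'
        rw [Finset.sum_apply]
        simp only [Pi.smul_apply, smul_eq_mul, stdv, mul_ite, mul_one, mul_zero]
        rw [Finset.sum_ite_eq Finset.univ j' t]
        simp
      rw [ht]
      refine Submodule.sum_mem R (fun j _ => Submodule.smul_mem R _ ?_)
      match j with
      | none => exact h0
      | some p =>
        by_cases hp : p.1.1 = p.1.2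
        · exact h1' p hp
        · exact h2 p hp
    intro t
    exact hall t
  · -- vanishing
    intro f hf
    funext j
    have hBflat : IsFlat ((fun x => v + l x) '' Cset j) m := (Cset_isFlat j).affine_image l hl v
    have hBsub : (fun x => v + l x) '' Cset j ⊆ A := by
      rintro x ⟨y, _, rfl⟩
      exact hφA y
    have hsum := hf _ hBflat hBsub
    have hfin : ((fun x => v + l x) '' Cset j).toFinite.toFinset = (CF j).image φ := by
      apply Finset.coe_injective
      simp only [Set.Finite.coe_toFinset, Finset.coe_image]
      rw [show ((CF j : Set (Fin (m + 2) → ZMod 2))) = Cset j from by ext y; simp [hCF]]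
    rw [flatSum, hfin, Finset.sum_image (fun x _ y _ h => hφ h)] at hsum
    simpa [hΨapp] using hsum

def Pk (k : ℕ) : ℕ := ∏ i ∈ Finset.range k, (2 ^ k - 2 ^ i)

lemma Pk_succ (k : ℕ) : Pk (k + 1) = 2 ^ k * (2 ^ (k + 1) - 1) * Pk k := by
  unfold Pk
  rw [Finset.prod_range_succ']
  have h : ∀ i ∈ Finset.range k, 2 ^ (k + 1) - 2 ^ (i + 1) = 2 * (2 ^ k - 2 ^ i) := by
    intro i hi
    have : 2 ^ i ≤ 2 ^ k := Nat.pow_le_pow_right (by norm_num) (Finset.mem_range.mp hi).le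
    rw [pow_succ, pow_succ]
    omega
  rw [Finset.prod_congr rfl h, Finset.prod_mul_distrib, Finset.prod_const, Finset.card_range,
    pow_zero]
  ring

lemma Pk_bound : ∀ k, 1 ≤ k → (2 ^ k + 2) * 2 ^ (k * k) ≤ 2 ^ (k + 2) * Pk k := by
  intro k
  induction k with
  | zero => omega
  | succ k ih =>
    intro _
    rcases Nat.eq_zero_or_pos k with rfl | hk
    · simp [Pk]
    · have IH := ih hk
      rw [Pk_succ]
      have hx : 2 ≤ 2 ^ k := by
        calc 2 = 2 ^ 1 := rfl
        _ ≤ 2 ^ k := Nat.pow_le_pow_right (by norm_num) hk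
      set x := 2 ^ k with hxdef
      have key : (2 ^ (k + 1) + 2) * 2 ^ k ≤ (2 ^ (k + 1) - 1) * (2 ^ k + 2) := by
        have h1 : 2 ^ (k + 1) = 2 * x := by rw [pow_succ]; ring
        have hsub : 2 ^ (k + 1) - 1 + 1 = 2 ^ (k + 1) :=
          Nat.succ_pred_eq_of_pos (pow_pos (by norm_num) _)
        rw [show (2:ℕ) ^ (k+1) = (2 ^ (k + 1) - 1) + 1 from hsub.symm]
        have hyx : (2 ^ (k + 1) - 1) + 1 = 2 * x := by rw [hsub, h1]
        set y := 2 ^ (k + 1) - 1 with hy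
        have hx2 : (2:ℕ) ^ k = x := rfl
        rw [hx2]
        simp only [Nat.add_sub_cancel]
        nlinarith [hyx, hx]
      have hexp : (k + 1) * (k + 1) = k * k + k + k + 1 := by ring
      calc (2 ^ (k + 1) + 2) * 2 ^ ((k + 1) * (k + 1))
          = ((2 ^ (k + 1) + 2) * 2 ^ k) * (2 ^ (k * k) * 2 ^ (k + 1)) := by
            rw [hexp, pow_add, pow_add, pow_add]; ring
        _ ≤ ((2 ^ (k + 1) - 1) * (2 ^ k + 2)) * (2 ^ (k * k) * 2 ^ (k + 1)) :=
            Nat.mul_le_mul_right _ key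
        _ = (2 ^ (k + 1) * (2 ^ (k + 1) - 1)) * ((2 ^ k + 2) * 2 ^ (k * k)) := by ring
        _ ≤ (2 ^ (k + 1) * (2 ^ (k + 1) - 1)) * (2 ^ (k + 2) * Pk k) :=
            Nat.mul_le_mul_left _ IH
        _ = 2 ^ (k + 1 + 2) * (2 ^ k * (2 ^ (k + 1) - 1) * Pk k) := by
            rw [pow_add, pow_add]; ring

lemma Pk_lower {k : ℕ} (hk : 2 ≤ k) : 2 ^ (k * k - 2) < Pk k := by
  have hb := Pk_bound k (by omega)
  have h1 : 2 ^ (k * k + k) < (2 ^ k + 2) * 2 ^ (k * k) := by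
    rw [pow_add]
    have : (2:ℕ) ^ (k * k) > 0 := pow_pos (by norm_num) _
    calc 2 ^ (k * k) * 2 ^ k = 2 ^ k * 2 ^ (k * k) := by ring
      _ < (2 ^ k + 2) * 2 ^ (k * k) := Nat.mul_lt_mul_of_pos_right (by omega) this
  have h2 : 2 ^ (k + 2) * 2 ^ (k * k - 2) = 2 ^ (k * k + k) := by
    rw [← pow_add]
    congr 1
    have : 4 ≤ k * k := by nlinarith
    omega
  have h3 : 2 ^ (k + 2) * 2 ^ (k * k - 2) < 2 ^ (k + 2) * Pk k := by
    rw [h2]; exact lt_of_lt_of_le h1 hb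
  exact lt_of_mul_lt_mul_left h3 (Nat.zero_le _)

lemma subspace_count {n k : ℕ} (hkn : k ≤ n) :
    (Finset.univ.filter
      (fun W : Submodule (ZMod 2) (Fin n → ZMod 2) => Module.finrank (ZMod 2) W = k)).card
      * Pk k ≤ 2 ^ (n * k) := by
  classical
  set S := Finset.univ.filter
    (fun W : Submodule (ZMod 2) (Fin n → ZMod 2) => Module.finrank (ZMod 2) W = k) with hS
  set T : Submodule (ZMod 2) (Fin n → ZMod 2) → Finset (Fin k → (Fin n → ZMod 2)) :=
    fun W => Finset.univ.filter
      (fun t => (∀ i, t i ∈ W) ∧ LinearIndependent (ZMod 2) t) with hT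
  have hdisj : ∀ W ∈ S, ∀ W' ∈ S, W ≠ W' → Disjoint (T W) (T W') := by
    intro W hW W' hW' hne
    rw [Finset.disjoint_left]
    intro t ht ht'
    apply hne
    have hWr : Module.finrank (ZMod 2) W = k := (Finset.mem_filter.mp hW).2
    have hWr' : Module.finrank (ZMod 2) W' = k := (Finset.mem_filter.mp hW').2
    obtain ⟨htW, hti⟩ := (Finset.mem_filter.mp ht).2
    obtain ⟨htW', _⟩ := (Finset.mem_filter.mp ht').2
    have hspan : ∀ (U : Submodule (ZMod 2) (Fin n → ZMod 2)),
        Module.finrank (ZMod 2) U = k → (∀ i, t i ∈ U) →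
        Submodule.span (ZMod 2) (Set.range t) = U := by
      intro U hU htU
      apply Submodule.eq_of_le_of_finrank_le
      · rw [Submodule.span_le]
        rintro x ⟨i, rfl⟩
        exact htU i
      · rw [hU, finrank_span_eq_card hti, Fintype.card_fin]
    rw [← hspan W hWr htW, ← hspan W' hWr' htW']
  have hcard : ∀ W ∈ S, Pk k ≤ (T W).card := by
    intro W hW
    have hWr : Module.finrank (ZMod 2) W = k := (Finset.mem_filter.mp hW).2
    have hc := card_linearIndependent (K := ZMod 2) (V := W) (k := k) (by rw [hWr])
    rw [ZMod.card, hWr] at hc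
    have hPk : Nat.card { s : Fin k → W // LinearIndependent (ZMod 2) s } = Pk k := by
      rw [hc, Pk]
      exact Fin.prod_univ_eq_prod_range (fun i => 2 ^ k - 2 ^ i) k
    rw [← hPk, Nat.card_eq_fintype_card]
    have : Fintype.card { s : Fin k → W // LinearIndependent (ZMod 2) s }
        ≤ Fintype.card {t // t ∈ T W} := by
      refine Fintype.card_le_of_injective
        (fun s => ⟨fun i => (s.1 i : Fin n → ZMod 2), ?_⟩) ?_
      · rw [hT]
        simp only [Finset.mem_filter, Finset.mem_univ, true_and]
        exact ⟨fun i => (s.1 i).2, s.2.map' W.subtype (Submodule.ker_subtype W)⟩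
      · intro s s' h
        apply Subtype.ext
        funext i
        have h2 := congrArg Subtype.val h
        exact Subtype.ext (congrFun h2 i)
    rwa [Fintype.card_coe] at this
  have hsum : S.card • Pk k ≤ ∑ W ∈ S, (T W).card := Finset.card_nsmul_le_sum S _ _ hcard
  rw [smul_eq_mul] at hsum
  calc S.card * Pk k ≤ ∑ W ∈ S, (T W).card := hsum
    _ = (S.biUnion T).card := (Finset.card_biUnion hdisj).symm
    _ ≤ Fintype.card (Fin k → (Fin n → ZMod 2)) := by
        rw [← Finset.card_univ]
        exact Finset.card_le_card (Finset.subset_univ _)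
    _ = 2 ^ (n * k) := by
        rw [Fintype.card_fun]
        rw [Fintype.card_fun, ZMod.card, Fintype.card_fin, Fintype.card_fin, ← pow_mul]

lemma coset_eq {n : ℕ} {W : Submodule (ZMod 2) (Fin n → ZMod 2)} {u v : Fin n → ZMod 2}
    (h : u - v ∈ W) :
    (fun w => u + w) '' (W : Set (Fin n → ZMod 2)) =
    (fun w => v + w) '' (W : Set (Fin n → ZMod 2)) := by
  ext z
  constructor
  · rintro ⟨w, hw, rfl⟩
    exact ⟨(u - v) + w, W.add_mem h hw, by simp; abel⟩
  · rintro ⟨w, hw, rfl⟩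
    refine ⟨(v - u) + w, W.add_mem ?_ hw, by simp; abel⟩
    have := W.neg_mem h
    simpa using this

lemma flat_count {n k : ℕ} (hkn : k ≤ n) :
    (Finset.univ.filter (fun A : Set (Fin n → ZMod 2) => IsFlat A k)).card
      ≤ (Finset.univ.filter
          (fun W : Submodule (ZMod 2) (Fin n → ZMod 2) =>
            Module.finrank (ZMod 2) W = k)).card * 2 ^ (n - k) := by
  classical
  set S := Finset.univ.filter
    (fun W : Submodule (ZMod 2) (Fin n → ZMod 2) => Module.finrank (ZMod 2) W = k) with hS
  set G : Submodule (ZMod 2) (Fin n → ZMod 2) → Finset (Set (Fin n → ZMod 2)) :=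
    fun W => Finset.image
      (fun q : (Fin n → ZMod 2) ⧸ W => (fun w => Quotient.out q + w) '' (W : Set (Fin n → ZMod 2)))
      Finset.univ with hG
  have hsub : Finset.univ.filter (fun A : Set (Fin n → ZMod 2) => IsFlat A k) ⊆ S.biUnion G := by
    intro A hA
    obtain ⟨W, v, hW, hAeq⟩ := (Finset.mem_filter.mp hA).2
    rw [Finset.mem_biUnion]
    refine ⟨W, by simp [hS, hW], ?_⟩
    rw [hG]
    simp only [Finset.mem_image, Finset.mem_univ, true_and]
    refine ⟨Submodule.Quotient.mk v, ?_⟩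
    rw [hAeq]
    apply coset_eq
    rw [← Submodule.Quotient.eq]
    exact Quotient.out_eq _
  calc (Finset.univ.filter (fun A : Set (Fin n → ZMod 2) => IsFlat A k)).card
      ≤ (S.biUnion G).card := Finset.card_le_card hsub
    _ ≤ ∑ W ∈ S, (G W).card := Finset.card_biUnion_le
    _ ≤ ∑ W ∈ S, 2 ^ (n - k) := by
        apply Finset.sum_le_sum
        intro W hW
        have hWr : Module.finrank (ZMod 2) W = k := (Finset.mem_filter.mp hW).2
        have hq : Fintype.card ((Fin n → ZMod 2) ⧸ W) = 2 ^ (n - k) := by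
          have h1 := Submodule.finrank_quotient_add_finrank W
          rw [hWr, Module.finrank_fintype_fun_eq_card, Fintype.card_fin] at h1
          have h2 := Module.card_eq_pow_finrank (K := ZMod 2) (V := (Fin n → ZMod 2) ⧸ W)
          rw [ZMod.card] at h2
          rw [h2]
          congr 1
          omega
        calc (G W).card ≤ Fintype.card ((Fin n → ZMod 2) ⧸ W) := by
              rw [hG, ← Finset.card_univ]
              exact Finset.card_image_le
          _ = 2 ^ (n - k) := hq
    _ = S.card * 2 ^ (n - k) := by rw [Finset.sum_const, smul_eq_mul]

lemma card_Jk (k : ℕ) : Fintype.card (Jk k) = ∑ i ∈ Finset.range 3, k.choose i := by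
  rw [Fintype.card_option]
  have h1 : Fintype.card {p : Fin k × Fin k // p.1 ≤ p.2} = (k + 1).choose 2 := by
    rw [← Fintype.card_congr (Sym2.sortEquiv (α := Fin k)), Sym2.card, Fintype.card_fin]
  rw [h1]
  have h2 : (k + 1).choose 2 = k.choose 1 + k.choose 2 := Nat.choose_succ_succ k 1
  simp [Finset.sum_range_succ, h2]
  omega

lemma arith_part1 {n k : ℕ} (hk : 5 ≤ k) (h1 : k + 2 ≤ n) (h2 : 2 * n ≤ 3 * k - 1) :
    (k + 1) * (n - k) + 2 ≤ ∑ i ∈ Finset.range 3, Nat.choose k i := by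
  have hsum : ∑ i ∈ Finset.range 3, Nat.choose k i = 1 + k + k.choose 2 := by
    simp [Finset.sum_range_succ]
  rw [hsum, Nat.choose_two_right]
  set e := k - 1 with he
  have hke : k = e + 1 := by omega
  set d := n - k with hd
  have hnd : n = k + d := by omega
  have hd2 : 2 * d ≤ e := by omega
  have hc : 2 * (k * (k - 1) / 2) = k * (k - 1) := by
    apply Nat.two_mul_div_two_of_even
    have : Even ((k - 1) * (k - 1 + 1)) := Nat.even_mul_succ_self (k - 1)
    have hk1 : k - 1 + 1 = k := by omega
    rw [hk1] at this
    rwa [mul_comm]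
  have hc' : 2 * (k * (k - 1) / 2) = (e + 1) * e := by
    rw [hc, hke, Nat.add_sub_cancel]
  set c := k * (k - 1) / 2 with hcdef
  rw [hke]
  nlinarith [hc', hd2]

lemma flats_lt {n k : ℕ} (hk : 2 ≤ k) (hkn : k ≤ n)
    (hJ : (k + 1) * (n - k) + 2 ≤ Fintype.card (Jk k)) :
    (Finset.univ.filter (fun A : Set (Fin n → ZMod 2) => IsFlat A k)).card
      < 2 ^ Fintype.card (Jk k) := by
  set S := Finset.univ.filter
    (fun W : Submodule (ZMod 2) (Fin n → ZMod 2) => Module.finrank (ZMod 2) W = k) with hS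
  have hflat := flat_count (n := n) (k := k) hkn
  rw [← hS] at hflat
  have hstep : (Finset.univ.filter (fun A : Set (Fin n → ZMod 2) => IsFlat A k)).card
      < 2 ^ ((k + 1) * (n - k) + 2) := by
    rcases Nat.eq_zero_or_pos S.card with h0 | hpos
    · rw [h0, zero_mul] at hflat
      exact lt_of_le_of_lt hflat (pow_pos (by norm_num) _)
    · have h1 : S.card * 2 ^ (k * k - 2) < S.card * Pk k :=
        Nat.mul_lt_mul_of_pos_left (Pk_lower hk) hpos
      have h2 : S.card * 2 ^ (k * k - 2) < 2 ^ (n * k) :=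
        lt_of_lt_of_le h1 (subspace_count hkn)
      have h3 : (2:ℕ) ^ (n * k) = 2 ^ (k * (n - k) + 2) * 2 ^ (k * k - 2) := by
        rw [← pow_add]
        congr 1
        have h4 : 4 ≤ k * k := by nlinarith
        have h6 : k * (n - k) + k * k = n * k := by
          rw [← Nat.mul_add, Nat.sub_add_cancel hkn]
          exact Nat.mul_comm k n
        omega
      have h7 : S.card * 2 ^ (k * k - 2) < (2 ^ (k * (n - k) + 2)) * 2 ^ (k * k - 2) := by
        rw [← h3]; exact h2
      have h8 : S.card < 2 ^ (k * (n - k) + 2) :=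
        lt_of_mul_lt_mul_right h7 (Nat.zero_le _)
      calc (Finset.univ.filter (fun A : Set (Fin n → ZMod 2) => IsFlat A k)).card
          ≤ S.card * 2 ^ (n - k) := hflat
        _ < 2 ^ (k * (n - k) + 2) * 2 ^ (n - k) := by
            apply Nat.mul_lt_mul_of_lt_of_le h8 (le_refl _)
            exact pow_pos (by norm_num) _
        _ = 2 ^ ((k + 1) * (n - k) + 2) := by
            rw [← pow_add]
            congr 1
            ring
  exact lt_of_lt_of_le hstep (Nat.pow_le_pow_right (by norm_num) hJ)

lemma exists_good {n m : ℕ}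
    (hflats : (Finset.univ.filter (fun A : Set (Fin n → ZMod 2) => IsFlat A (m + 2))).card
      < 2 ^ Fintype.card (Jk (m + 2))) :
    ∃ f : BF n, ∀ A : Set (Fin n → ZMod 2), IsFlat A (m + 2) →
      ∃ B, IsFlat B m ∧ B ⊆ A ∧ flatSum f B ≠ 0 := by
  classical
  set J := Fintype.card (Jk (m + 2)) with hJ
  set Flats := Finset.univ.filter (fun A : Set (Fin n → ZMod 2) => IsFlat A (m + 2)) with hFl
  set badF : Set (Fin n → ZMod 2) → Finset (BF n) := fun A =>
    Finset.univ.filter (fun f => ∀ B, IsFlat B m → B ⊆ A → flatSum f B = 0) with hbadF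
  have hcardBF : Fintype.card (BF n) = 2 ^ (2 ^ n) := by
    rw [Fintype.card_fun, ZMod.card, Fintype.card_fun, ZMod.card, Fintype.card_fin]
  have hbadA : ∀ A : Set (Fin n → ZMod 2), IsFlat A (m + 2) →
      (badF A).card * 2 ^ J ≤ 2 ^ (2 ^ n) := by
    intro A hA
    obtain ⟨Ψ, hsurj, hvan⟩ := exists_psi hA
    have hsub : badF A ⊆ (LinearMap.ker Ψ : Set (BF n)).toFinset := by
      intro f hf
      rw [Set.mem_toFinset]
      exact LinearMap.mem_ker.mpr (hvan f (Finset.mem_filter.mp hf).2)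
    have h1 : (badF A).card ≤ Nat.card (LinearMap.ker Ψ) := by
      have h0 := Finset.card_le_card hsub
      rw [Set.toFinset_card] at h0
      rw [Nat.card_eq_fintype_card]
      exact le_trans h0 (le_of_eq (by congr 1))
    have hq := Submodule.card_eq_card_quotient_mul_card (LinearMap.ker Ψ)
    have he : Nat.card (BF n ⧸ LinearMap.ker Ψ) = Nat.card (Jk (m + 2) → ZMod 2) :=
      Nat.card_congr (LinearMap.quotKerEquivOfSurjective Ψ hsurj).toEquiv
    rw [he] at hq
    have h3 : Nat.card (Jk (m + 2) → ZMod 2) = 2 ^ J := by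
      rw [Nat.card_eq_fintype_card, Fintype.card_fun, ZMod.card, hJ]
    have h4 : Nat.card (BF n) = 2 ^ (2 ^ n) := by rw [Nat.card_eq_fintype_card, hcardBF]
    calc (badF A).card * 2 ^ J ≤ Nat.card (LinearMap.ker Ψ) * 2 ^ J :=
          Nat.mul_le_mul_right _ h1
      _ = Nat.card (LinearMap.ker Ψ) * Nat.card (Jk (m + 2) → ZMod 2) := by rw [h3]
      _ = 2 ^ (2 ^ n) := by rw [← hq, h4]
  set Bad := Finset.univ.filter (fun f : BF n => ∃ A : Set (Fin n → ZMod 2),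
    IsFlat A (m + 2) ∧ ∀ B, IsFlat B m → B ⊆ A → flatSum f B = 0) with hBadDef
  have hBadsub : Bad ⊆ Flats.biUnion badF := by
    intro f hf
    obtain ⟨A, hA, hAf⟩ := (Finset.mem_filter.mp hf).2
    rw [Finset.mem_biUnion]
    exact ⟨A, Finset.mem_filter.mpr ⟨Finset.mem_univ A, hA⟩,
      Finset.mem_filter.mpr ⟨Finset.mem_univ f, hAf⟩⟩
  have hBadlt : Bad.card < 2 ^ (2 ^ n) := by
    have hc1 : Bad.card ≤ ∑ A ∈ Flats, (badF A).card :=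
      le_trans (Finset.card_le_card hBadsub) Finset.card_biUnion_le
    have hc2 : Bad.card * 2 ^ J ≤ ∑ A ∈ Flats, ((badF A).card * 2 ^ J) := by
      rw [← Finset.sum_mul]
      exact Nat.mul_le_mul_right _ hc1
    have hc3 : ∑ A ∈ Flats, ((badF A).card * 2 ^ J) ≤ Flats.card * 2 ^ (2 ^ n) := by
      calc ∑ A ∈ Flats, ((badF A).card * 2 ^ J) ≤ ∑ _A ∈ Flats, 2 ^ (2 ^ n) :=
            Finset.sum_le_sum (fun A hA => hbadA A (Finset.mem_filter.mp hA).2)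
        _ = Flats.card * 2 ^ (2 ^ n) := by rw [Finset.sum_const, smul_eq_mul]
    have hc4 : Bad.card * 2 ^ J < 2 ^ (2 ^ n) * 2 ^ J := by
      calc Bad.card * 2 ^ J ≤ Flats.card * 2 ^ (2 ^ n) := le_trans hc2 hc3
        _ < 2 ^ J * 2 ^ (2 ^ n) :=
            Nat.mul_lt_mul_of_lt_of_le hflats (le_refl _) (pow_pos (by norm_num) _)
        _ = 2 ^ (2 ^ n) * 2 ^ J := by ring
    exact lt_of_mul_lt_mul_right hc4 (Nat.zero_le _)
  have hex : ∃ f : BF n, f ∉ Bad := by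
    by_contra hc
    push_neg at hc
    have : (Finset.univ : Finset (BF n)) ⊆ Bad := fun f _ => hc f
    have := Finset.card_le_card this
    rw [Finset.card_univ, hcardBF] at this
    omega
  obtain ⟨f, hf⟩ := hex
  refine ⟨f, ?_⟩
  intro A hA
  rw [hBadDef] at hf
  simp only [Finset.mem_filter, Finset.mem_univ, true_and, not_exists, not_and] at hf
  have := hf A hA
  push_neg at this
  exact this

lemma flat_dim_le {n : ℕ} {A B : Set (Fin n → ZMod 2)} {d e : ℕ}
    (hA : IsFlat A d) (hB : IsFlat B e) (hsub : B ⊆ A) : e ≤ d := by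
  have hc : B.toFinite.toFinset ⊆ A.toFinite.toFinset := by
    intro x hx
    rw [Set.Finite.mem_toFinset] at hx ⊢
    exact hsub hx
  have := Finset.card_le_card hc
  rw [hA.card, hB.card] at this
  exact (Nat.pow_le_pow_iff_right (by norm_num)).mp this

lemma degLE_top {n : ℕ} (g : BF n) {A : Set (Fin n → ZMod 2)} {d : ℕ} (hA : IsFlat A d) :
    DegLE g A d := by
  intro B hB hBA
  exfalso
  have := flat_dim_le hA hB hBA
  omega

theorem stmt13 {n k : ℕ} (hk : 5 ≤ k) (h1 : k + 2 ≤ n) (h2 : 2 * n ≤ 3 * k - 1) :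
    (k + 1) * (n - k) + 2 ≤ ∑ i ∈ Finset.range 3, Nat.choose k i ∧
    k - 2 ≤ gdeg n k := by
  have hpart1 := arith_part1 hk h1 h2
  refine ⟨hpart1, ?_⟩
  obtain ⟨m, rfl⟩ : ∃ m, k = m + 2 := ⟨k - 2, by omega⟩
  have hkn : m + 2 ≤ n := by omega
  -- a k-flat exists
  obtain ⟨A0, hA0⟩ := exists_flat (n := n) hkn
  -- upper bound for alphaDeg of any g
  have halpha_le : ∀ g : BF n, alphaDeg g (m + 2) ≤ m + 2 := by
    intro g
    have hm : degOn g A0 ∈ {d | ∃ A, IsFlat A (m + 2) ∧ degOn g A = d} := ⟨A0, hA0, rfl⟩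
    have hub : degOn g A0 ≤ m + 2 := Nat.sInf_le (degLE_top g hA0)
    exact le_trans (Nat.sInf_le hm) hub
  -- the good function
  have hJle : (m + 2 + 1) * (n - (m + 2)) + 2 ≤ Fintype.card (Jk (m + 2)) := by
    rw [card_Jk]
    exact hpart1
  obtain ⟨f, hgood⟩ := exists_good (flats_lt (by omega) hkn hJle)
  -- lower bound for degOn of f on any (m+2)-flat
  have hdeg_lb : ∀ A : Set (Fin n → ZMod 2), IsFlat A (m + 2) → m ≤ degOn f A := by
    intro A hA
    have hne : DegLE f A (m + 2) := degLE_top f hA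
    have hmem : degOn f A ∈ {d | DegLE f A d} := Nat.sInf_mem ⟨m + 2, hne⟩
    by_contra hc
    push_neg at hc
    obtain ⟨B, hB, hBA, hBs⟩ := hgood A hA
    obtain ⟨B', hB', hB'A, hB's⟩ := descent f hB hBA hBs (degOn f A + 1) (by omega)
    exact hB's (hmem B' hB' hB'A)
  -- lower bound for alphaDeg of f
  have halpha_lb : m ≤ alphaDeg f (m + 2) := by
    have hne : {d | ∃ A, IsFlat A (m + 2) ∧ degOn f A = d}.Nonempty :=
      ⟨degOn f A0, A0, hA0, rfl⟩
    obtain ⟨A, hA, hAeq⟩ := Nat.sInf_mem hne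
    rw [alphaDeg, ← hAeq]
    exact hdeg_lb A hA
  -- conclude
  have hmem : alphaDeg f (m + 2) ∈ {m' | ∃ g : BF n, alphaDeg g (m + 2) = m'} := ⟨f, rfl⟩
  have hbdd : BddAbove {m' | ∃ g : BF n, alphaDeg g (m + 2) = m'} := by
    refine ⟨m + 2, ?_⟩
    rintro x ⟨g, rfl⟩
    exact halpha_le g
  have : alphaDeg f (m + 2) ≤ gdeg n (m + 2) := le_csSup hbdd hmem
  have hfin : m + 2 - 2 = m := by omega
  rw [hfin]
  omega
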